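/- Let u be a positive integer and let A(n), B(n) be integer-valued processes whose increments always belong to {u, −1}. Then ∑_{i=0}^{n} 1{A(i)=B(i)} ≤ |A(n+1)−B(n+1)| − |A(0)−B(0)| − ∑_{i=0}^{n} sgn(A(i)−B(i))·ΔA(i) + ∑_{i=0}^{n} sgn(A(i+1)−B(i))·ΔB(i), where ΔF(i)=F(i+1)−F(i) and sgn(0)=0. -/

import Mathlib

lemma sign_mul_le_abs (y x : ℤ) : Int.sign y * x ≤ |x| := by
  rcases lt_trichotomy y 0 with h | h | h
  · rw [Int.sign_eq_neg_one_of_neg h]; rcases abs_cases x with ⟨h1, _⟩ | ⟨h1, _⟩ <;> linarith [abs_nonneg x]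
  · rw [h, Int.sign_zero]; simp [abs_nonneg x]
  · rw [Int.sign_eq_one_of_pos h]; rcases abs_cases x with ⟨h1, _⟩ | ⟨h1, _⟩ <;> linarith [abs_nonneg x]

lemma sign_mul_self_eq_abs (x : ℤ) : Int.sign x * x = |x| := by
  rcases lt_trichotomy x 0 with h | h | h
  · rw [Int.sign_eq_neg_one_of_neg h, abs_of_neg h]; ring
  · simp [h]
  · rw [Int.sign_eq_one_of_pos h, abs_of_pos h]; ring

lemma tanaka_step (u a a' b b' : ℤ) (hu : 1 ≤ u)
    (ha : a' - a = u ∨ a' - a = -1) (hb : b' - b = u ∨ b' - b = -1) :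
    (if a = b then (1 : ℤ) else 0)
      ≤ |a' - b'| - |a - b| - Int.sign (a - b) * (a' - a) + Int.sign (a' - b) * (b' - b) := by
  have h1 : Int.sign (a' - b) * (a' - b') ≤ |a' - b'| := sign_mul_le_abs _ _
  have h2 : Int.sign (a' - b) * (a' - b) = |a' - b| := sign_mul_self_eq_abs _
  have br1 : 0 ≤ |a' - b'| - |a' - b| + Int.sign (a' - b) * (b' - b) := by nlinarith [h1, h2]
  by_cases hab : a = b
  · subst hab
    have h5 : |a' - a| ≥ 1 := by rcases ha with h | h <;> rcases abs_cases (a' - a) <;> omega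
    rw [if_pos rfl]
    simp only [sub_self, Int.sign_zero, zero_mul, abs_zero]
    linarith
  · have h3 : Int.sign (a - b) * (a' - b) ≤ |a' - b| := sign_mul_le_abs _ _
    have h4 : Int.sign (a - b) * (a - b) = |a - b| := sign_mul_self_eq_abs _
    rw [if_neg hab]
    nlinarith [h3, h4, br1]

/-- Discrete Tanaka formula: if `A` and `B` are integer-valued processes whose increments
always belong to `{u, -1}` with `u ≥ 1`, then
`∑_{i=0}^{n} 1{A i = B i} ≤ |A(n+1)−B(n+1)| − |A 0 − B 0|
  − ∑_{i=0}^{n} sgn(A i − B i)·ΔA i + ∑_{i=0}^{n} sgn(A (i+1) − B i)·ΔB i`. -/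
theorem tanaka (u : ℤ) (hu : 1 ≤ u) (A B : ℕ → ℤ)
    (hA : ∀ n, A (n + 1) - A n = u ∨ A (n + 1) - A n = -1)
    (hB : ∀ n, B (n + 1) - B n = u ∨ B (n + 1) - B n = -1) (n : ℕ) :
    (∑ i ∈ Finset.range (n + 1), if A i = B i then (1 : ℤ) else 0)
      ≤ |A (n + 1) - B (n + 1)| - |A 0 - B 0|
        - (∑ i ∈ Finset.range (n + 1), Int.sign (A i - B i) * (A (i + 1) - A i))
        + ∑ i ∈ Finset.range (n + 1), Int.sign (A (i + 1) - B i) * (B (i + 1) - B i) := by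
  induction n with
  | zero =>
      rw [Finset.sum_range_one, Finset.sum_range_one, Finset.sum_range_one]
      exact tanaka_step u (A 0) (A 1) (B 0) (B 1) hu (hA 0) (hB 0)
  | succ n ih =>
      rw [Finset.sum_range_succ (f := fun i => if A i = B i then (1 : ℤ) else 0) (n + 1),
          Finset.sum_range_succ (f := fun i => Int.sign (A i - B i) * (A (i + 1) - A i)) (n + 1),
          Finset.sum_range_succ (f := fun i => Int.sign (A (i + 1) - B i) * (B (i + 1) - B i)) (n + 1)]
      have step := tanaka_step u (A (n+1)) (A (n+2)) (B (n+1)) (B (n+2)) hu (hA (n+1)) (hB (n+1))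
      simp only [show n + 1 + 1 = n + 2 from rfl] at *
      linarith
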